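/- Let R be a commutative ring, A a commutative R-algebra, L an A-module with an R-bilinear alternating bracket ⁅·,·⁆, and θ : L → Der_R(A) an R-linear map with θ(aα) = a·θ(α) for all a ∈ A, α ∈ L. Suppose the canonical double-dual map L → Hom_A(Hom_A(L,A), A) is injective, and suppose that for every A-linear φ : L → A the 2-form dφ, (dφ)(α,β) = θ(α)(φ(β)) − θ(β)(φ(α)) − φ(⁅α,β⁆), is A-linear in the second argument: (dφ)(α, aβ) = a·(dφ)(α,β) for all α, β ∈ L, a ∈ A. Then the Lie–Rinehart axiom holds: ⁅α, aβ⁆ = a⁅α,β⁆ + θ(α)(a)·β for all α, β ∈ L and a ∈ A. -/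
import Mathlib


/-- If the canonical map from `L` to its double `A`-dual is injective, `θ(aα) = a θ(α)`,
and for every `A`-linear `φ : L → A` the 2-form
`dφ(α,β) = θ(α)(φ(β)) − θ(β)(φ(α)) − φ(⁅α,β⁆)` is `A`-linear in the second argument,
then the Lie–Rinehart axiom `⁅α, aβ⁆ = a⁅α,β⁆ + θ(α)(a) β` holds. -/
theorem lieRinehart_axiom_of_descent {R A L : Type*} [CommRing R] [CommRing A] [Algebra R A]
    [AddCommGroup L] [Module R L] [Module A L] [IsScalarTower R A L]
    (br : L →ₗ[R] L →ₗ[R] L) (hbr : ∀ x : L, br x x = 0)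
    (θ : L →ₗ[R] Derivation R A A)
    (hθA : ∀ (a : A) (α : L) (b : A), θ (a • α) b = a * θ α b)
    (hinj : Function.Injective (Module.Dual.eval A L))
    (hd : ∀ (φ : L →ₗ[A] A) (α β : L) (a : A),
        θ α (φ (a • β)) - θ (a • β) (φ α) - φ (br α (a • β)) =
          a * (θ α (φ β) - θ β (φ α) - φ (br α β)))
    (α β : L) (a : A) :
    br α (a • β) = a • br α β + θ α a • β := by
  apply hinj
  ext φ
  have h := hd φ α β a
  rw [map_smul, smul_eq_mul, Derivation.leibniz, hθA, smul_eq_mul, smul_eq_mul] at h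
  simp only [Module.Dual.eval_apply, map_add, map_smul, LinearMap.add_apply, LinearMap.smul_apply, smul_eq_mul]
  linear_combination -h
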